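/- Soundness of the independence rule: for any formulas F_1, F_2 and variable p, {F_1, F_2} ⊨ ∂_p(F_1,F_2), where ∂_p(F_1,F_2) = Θ(∂_{x_p}(π(F_1), π(F_2))) and, writing π(F_i) = b_i + x_p·c_i with b_i, c_i free of x_p, ∂_{x_p}(a_1,a_2) = Φ(1 + (1+b_1·b_2)·(1+(b_1+c_1)(b_2+c_2))). -/

import Mathlib

inductive Fm (V : Type) : Type
  | bot : Fm V
  | var : V → Fm V
  | not : Fm V → Fm V
  | and : Fm V → Fm V → Fm V
  | or  : Fm V → Fm V → Fm V
  | imp : Fm V → Fm V → Fm V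
  | iff : Fm V → Fm V → Fm V

def Fm.eval {V : Type} (v : V → Bool) : Fm V → Bool
  | .bot => false
  | .var p => v p
  | .not F => !(F.eval v)
  | .and F G => F.eval v && G.eval v
  | .or F G => F.eval v || G.eval v
  | .imp F G => !(F.eval v) || G.eval v
  | .iff F G => F.eval v == G.eval v

noncomputable def Fm.poly {n : ℕ} : Fm (Fin n) → MvPolynomial (Fin n) (ZMod 2)
  | .bot => 0
  | .var i => MvPolynomial.X i
  | .not F => 1 + F.poly
  | .and F G => F.poly * G.poly
  | .or F G => F.poly + G.poly + F.poly * G.poly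
  | .imp F G => 1 + F.poly + F.poly * G.poly
  | .iff F G => 1 + F.poly + G.poly

def bval (b : Bool) : ZMod 2 := if b then 1 else 0

/-- The map `Φ` reducing every exponent of a polynomial to at most 1
(the multilinear representative modulo `I_2`). -/
noncomputable def squash {n : ℕ} (a : MvPolynomial (Fin n) (ZMod 2)) :
    MvPolynomial (Fin n) (ZMod 2) :=
  a.support.sum fun m =>
    MvPolynomial.monomial (Finsupp.mapRange (fun e => min e 1) (by simp) m) (a.coeff m)

/-- The polynomial projection `π = Φ ∘ P`. -/
noncomputable def Fm.proj {n : ℕ} (F : Fm (Fin n)) : MvPolynomial (Fin n) (ZMod 2) :=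
  squash F.poly

/-- The substitution `F{p/¬p}`. -/
def substNeg {n : ℕ} (p : Fin n) : Fm (Fin n) → Fm (Fin n)
  | .bot => .bot
  | .var q => if q = p then .not (.var p) else .var q
  | .not F => .not (substNeg p F)
  | .and F G => .and (substNeg p F) (substNeg p G)
  | .or F G => .or (substNeg p F) (substNeg p G)
  | .imp F G => .imp (substNeg p F) (substNeg p G)
  | .iff F G => .iff (substNeg p F) (substNeg p G)

/-- The Boolean derivative `∂F/∂p`, in its semantic form `¬(F{p/¬p} ↔ F)`. -/
def derivFm {n : ℕ} (p : Fin n) (F : Fm (Fin n)) : Fm (Fin n) :=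
  Fm.not (Fm.iff (substNeg p F) F)

/-- The part `b` of the decomposition `a = b + x_p·c` (free of `x_p`): `a` with `x_p := 0`. -/
noncomputable def bPart {n : ℕ} (p : Fin n) (a : MvPolynomial (Fin n) (ZMod 2)) :
    MvPolynomial (Fin n) (ZMod 2) :=
  MvPolynomial.aeval (fun j : Fin n => if j = p then 0 else MvPolynomial.X j) a

/-- The part `c` of the decomposition `a = b + x_p·c` of a multilinear polynomial:
the formal partial derivative of `a` with respect to `x_p`. -/
noncomputable def cPart {n : ℕ} (p : Fin n) (a : MvPolynomial (Fin n) (ZMod 2)) :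
    MvPolynomial (Fin n) (ZMod 2) :=
  MvPolynomial.pderiv p a

/-- The independence rule on polynomials:
`∂_{x_p}(a₁,a₂) = Φ(1 + (1 + b₁b₂)·(1 + (b₁+c₁)(b₂+c₂)))`. -/
noncomputable def indRule {n : ℕ} (p : Fin n) (a₁ a₂ : MvPolynomial (Fin n) (ZMod 2)) :
    MvPolynomial (Fin n) (ZMod 2) :=
  squash (1 + (1 + bPart p a₁ * bPart p a₂) *
    (1 + (bPart p a₁ + cPart p a₁) * (bPart p a₂ + cPart p a₂)))


open MvPolynomial Finsupp in
lemma pow_min_one (x : ZMod 2) (e : ℕ) : x ^ min e 1 = x ^ e := by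
  have hx : ∀ k, x ^ (k + 1) = x := by
    intro k
    induction k with
    | zero => simp
    | succ m ih => rw [pow_succ, ih]; fin_cases x <;> rfl
  cases e with
  | zero => simp
  | succ k => rw [hx, Nat.succ_min_succ, Nat.min_eq_right (Nat.zero_le k), pow_one]

open MvPolynomial in
lemma eval_squash {n : ℕ} (w : Fin n → ZMod 2) (a : MvPolynomial (Fin n) (ZMod 2)) :
    MvPolynomial.eval w (squash a) = MvPolynomial.eval w a := by
  rw [squash, map_sum, MvPolynomial.eval_eq]
  refine Finset.sum_congr rfl fun m hm => ?_
  rw [MvPolynomial.eval_monomial]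
  congr 1
  rw [Finsupp.prod_mapRange_index (fun i => by simp)]
  · exact Finsupp.prod_congr fun i _ => pow_min_one (w i) (m i)

open MvPolynomial in
lemma eval_bPart {n : ℕ} (p : Fin n) (w : Fin n → ZMod 2)
    (a : MvPolynomial (Fin n) (ZMod 2)) :
    MvPolynomial.eval w (bPart p a) =
      MvPolynomial.eval (Function.update w p 0) a := by
  rw [bPart, MvPolynomial.aeval_def, MvPolynomial.algebraMap_eq, ← MvPolynomial.eval_assoc]
  have h : (⇑(MvPolynomial.eval w) ∘ fun j =>
      if j = p then (0 : MvPolynomial (Fin n) (ZMod 2)) else MvPolynomial.X j)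
      = Function.update w p 0 := by
    funext j
    by_cases h : j = p <;> simp [h, Function.update_apply]
  rw [h]


open MvPolynomial Finsupp in
lemma eval_cPart_squash {n : ℕ} (p : Fin n) (w : Fin n → ZMod 2)
    (a : MvPolynomial (Fin n) (ZMod 2)) :
    MvPolynomial.eval w (cPart p (squash a)) =
      MvPolynomial.eval (Function.update w p 1) a +
      MvPolynomial.eval (Function.update w p 0) a := by
  have h2 : ∀ y : ZMod 2, y + y = 0 := by decide
  rw [cPart, squash, map_sum, map_sum,
      MvPolynomial.eval_eq (Function.update w p 1),
      MvPolynomial.eval_eq (Function.update w p 0), ← Finset.sum_add_distrib]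
  refine Finset.sum_congr rfl fun m hm => ?_
  rw [pderiv_monomial, eval_monomial]
  set m' : (Fin n) →₀ ℕ := Finsupp.mapRange (fun e => min e 1) (by simp) m with hm'
  have hm'app : ∀ i, m' i = min (m i) 1 := fun i => Finsupp.mapRange_apply
  by_cases hp : m p = 0
  · have h1 : m' p = 0 := by rw [hm'app, hp]; rfl
    have hps : p ∉ m.support := by simp [Finsupp.mem_support_iff, hp]
    rw [h1]
    simp only [Nat.cast_zero, mul_zero, zero_mul]
    have heq : (∏ i ∈ m.support, Function.update w p 1 i ^ m i)
        = ∏ i ∈ m.support, Function.update w p 0 i ^ m i := by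
      refine Finset.prod_congr rfl fun i hi => ?_
      have : i ≠ p := fun h => hps (h ▸ hi)
      rw [Function.update_of_ne this, Function.update_of_ne this]
    rw [heq, ← add_mul, h2, zero_mul]
  · have h1 : m' p = 1 := by
      rw [hm'app]; omega
    have hps : p ∈ m.support := Finsupp.mem_support_iff.mpr hp
    -- the zero term
    have hz : (∏ i ∈ m.support, Function.update w p 0 i ^ m i) = 0 := by
      refine Finset.prod_eq_zero hps ?_
      rw [Function.update_self, zero_pow hp]
    rw [hz, mul_zero, add_zero, h1, Nat.cast_one, mul_one]
    -- the one term
    have h1t : (∏ i ∈ m.support, Function.update w p 1 i ^ m i)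
        = ∏ i ∈ m.support.erase p, w i ^ m i := by
      rw [← Finset.mul_prod_erase _ _ hps, Function.update_self, one_pow, one_mul]
      refine Finset.prod_congr rfl fun i hi => ?_
      rw [Function.update_of_ne (Finset.ne_of_mem_erase hi)]
    rw [h1t]
    congr 1
    -- LHS: prod over m' - single p 1
    have hsub : m' - Finsupp.single p 1 = Finsupp.erase p m' := by
      ext i
      rw [Finsupp.tsub_apply, Finsupp.erase_apply]
      by_cases hip : i = p
      · subst hip; simp [h1]
      · simp [hip, Finsupp.single_eq_of_ne (Ne.symm hip)]
    have hsupp : m'.support = m.support := by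
      ext i
      simp only [Finsupp.mem_support_iff, hm'app]
      omega
    rw [hsub, Finsupp.prod, Finsupp.support_erase, hsupp]
    refine Finset.prod_congr rfl fun i hi => ?_
    rw [Finsupp.erase_apply, if_neg (Finset.mem_erase.mp hi).1, hm'app,
        pow_min_one]


open MvPolynomial in
lemma eval_poly {n : ℕ} (u : Fin n → Bool) (F : Fm (Fin n)) :
    MvPolynomial.eval (fun i => bval (u i)) F.poly = bval (F.eval u) := by
  induction F with
  | bot => simp [Fm.poly, Fm.eval, bval]
  | var i => simp [Fm.poly, Fm.eval]
  | not F ih =>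
      simp only [Fm.poly, Fm.eval, map_add, map_one, ih]
      cases F.eval u <;> decide
  | and F G ihF ihG =>
      simp only [Fm.poly, Fm.eval, map_mul, ihF, ihG]
      cases F.eval u <;> cases G.eval u <;> decide
  | or F G ihF ihG =>
      simp only [Fm.poly, Fm.eval, map_add, map_mul, ihF, ihG]
      cases F.eval u <;> cases G.eval u <;> decide
  | imp F G ihF ihG =>
      simp only [Fm.poly, Fm.eval, map_add, map_mul, map_one, ihF, ihG]
      cases F.eval u <;> cases G.eval u <;> decide
  | iff F G ihF ihG =>
      simp only [Fm.poly, Fm.eval, map_add, map_one, ihF, ihG]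
      cases F.eval u <;> cases G.eval u <;> decide

/-- Soundness of the independence rule: `{F₁,F₂} ⊨ ∂_p(F₁,F₂)`, where
`∂_p(F₁,F₂) = Θ(∂_{x_p}(π F₁, π F₂))` is any formula `D` whose semantics is given by
evaluation of the polynomial `∂_{x_p}(π F₁, π F₂)` (the semantic specification of `Θ`). -/
theorem stmt16 {n : ℕ} (p : Fin n) (F₁ F₂ D : Fm (Fin n))
    (hD : ∀ v : Fin n → Bool,
      bval (D.eval v) =
        MvPolynomial.eval (fun i => bval (v i)) (indRule p F₁.proj F₂.proj)) :
    ∀ v : Fin n → Bool, F₁.eval v = true → F₂.eval v = true → D.eval v = true := by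
  intro v h1 h2
  classical
  have h := hD v
  set w : Fin n → ZMod 2 := fun i => bval (v i) with hw
  have hup : ∀ t : Bool,
      (fun i => bval (Function.update v p t i)) = Function.update w p (bval t) := by
    intro t; funext i
    by_cases hip : i = p <;> simp [hip, Function.update_apply, hw]
  have E : ∀ (t : Bool) (F : Fm (Fin n)),
      MvPolynomial.eval (Function.update w p (bval t)) F.poly
        = bval (F.eval (Function.update v p t)) := by
    intro t F
    rw [← hup t, eval_poly]
  rw [indRule, eval_squash] at h
  simp only [map_add, map_mul, map_one] at h
  rw [show (F₁.proj) = squash F₁.poly from rfl,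
      show (F₂.proj) = squash F₂.poly from rfl,
      eval_bPart, eval_bPart, eval_cPart_squash, eval_cPart_squash,
      eval_squash, eval_squash] at h
  have hb0 : (bval false : ZMod 2) = 0 := rfl
  have hb1 : (bval true : ZMod 2) = 1 := rfl
  cases hvp : v p with
  | true =>
      have hv1 : Function.update v p true = v := by
        rw [← hvp]; exact Function.update_eq_self p v
      have hw1 : Function.update w p 1 = w := by
        have : w p = 1 := by rw [hw]; simp [hvp, bval]
        rw [← this]; exact Function.update_eq_self p w
      have e1 : MvPolynomial.eval (Function.update w p 1) F₁.poly = 1 := by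
        rw [← hb1, E, hv1, h1, hb1]
      have e2 : MvPolynomial.eval (Function.update w p 1) F₂.poly = 1 := by
        rw [← hb1, E, hv1, h2, hb1]
      rw [e1, e2] at h
      have key : ∀ x y : ZMod 2,
          1 + (1 + x * y) * (1 + (x + (1 + x)) * (y + (1 + y))) = 1 := by decide
      rw [key] at h
      cases hd : D.eval v with
      | true => rfl
      | false => rw [hd, hb0] at h; exact absurd h (by decide)
  | false =>
      have hv0 : Function.update v p false = v := by
        rw [← hvp]; exact Function.update_eq_self p v
      have hw0 : Function.update w p 0 = w := by
        have : w p = 0 := by rw [hw]; simp [hvp, bval]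
        rw [← this]; exact Function.update_eq_self p w
      have e1 : MvPolynomial.eval (Function.update w p 0) F₁.poly = 1 := by
        rw [← hb0, E, hv0, h1, hb1]
      have e2 : MvPolynomial.eval (Function.update w p 0) F₂.poly = 1 := by
        rw [← hb0, E, hv0, h2, hb1]
      rw [e1, e2] at h
      have key : ∀ x y : ZMod 2,
          1 + (1 + 1 * 1) * (1 + (1 + (x + 1)) * (1 + (y + 1))) = 1 := by decide
      rw [key] at h
      cases hd : D.eval v with
      | true => rfl
      | false => rw [hd, hb0] at h; exact absurd h (by decide)
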